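/- Proposition (convergence of trajectories of W_k to vertices). If γ is a trajectory of W_k with γ(t) ∈ Δ_k for all t ∈ ℝ, then there exist indices j_−, j_+ ∈ {0,…,k} with j_− ≤ j_+ such that γ(t) converges to the vertex e_{j_−} as t → −∞ and γ(t) converges to the vertex e_{j_+} as t → +∞; moreover j_− = j_+ if and only if γ is constant. -/

import Mathlib

open Finset Filter

/-- The simplicial vector field `W_k` on `ℝ^{k+1}`, given componentwise by
`(W_k x)_m = x_m * (∑_{i<m} x_i − ∑_{i>m} x_i)`. -/
noncomputable def Wfield (k : ℕ) (x : Fin (k + 1) → ℝ) : Fin (k + 1) → ℝ :=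
  fun m => x m * ((∑ i ∈ univ.filter (fun i => i < m), x i)
                - (∑ i ∈ univ.filter (fun i => m < i), x i))


section Helpers

lemma fin_le_succ_iff {k : ℕ} (j : Fin (k + 1)) (i : Fin k) :
    j ≤ i.succ ↔ j ≤ i.castSucc ∨ j = i.succ := by
  rw [Fin.le_def, Fin.le_def, Fin.ext_iff]
  simp only [Fin.val_succ, Fin.coe_castSucc]
  omega

lemma cum_zero {k : ℕ} (x : Fin (k + 1) → ℝ) :
    ∑ i ∈ univ.filter (fun i => i ≤ (0 : Fin (k + 1))), x i = x 0 := by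
  rw [show univ.filter (fun i : Fin (k + 1) => i ≤ 0) = {0} by
    ext i; simp [Fin.le_zero_iff]]
  simp

lemma cum_succ {k : ℕ} (x : Fin (k + 1) → ℝ) (i : Fin k) :
    ∑ j ∈ univ.filter (fun j => j ≤ i.succ), x j
      = (∑ j ∈ univ.filter (fun j => j ≤ i.castSucc), x j) + x i.succ := by
  classical
  have hnot : i.succ ∉ univ.filter (fun j : Fin (k + 1) => j ≤ i.castSucc) := by
    simp only [mem_filter, mem_univ, true_and]
    rw [Fin.le_def]
    simp only [Fin.val_succ, Fin.coe_castSucc]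
    omega
  rw [show univ.filter (fun j : Fin (k + 1) => j ≤ i.succ)
      = insert i.succ (univ.filter (fun j => j ≤ i.castSucc)) by
    ext j
    simp only [mem_filter, mem_univ, true_and, mem_insert]
    rw [fin_le_succ_iff]
    tauto]
  rw [Finset.sum_insert hnot]
  ring

lemma if_zero_eq {k : ℕ} (j : Fin (k + 1)) :
    (if j ≤ 0 then (1:ℝ) else 0) = (Pi.single j 1 : Fin (k + 1) → ℝ) 0 := by
  rw [Pi.single_apply]
  by_cases h : j = 0 <;> simp [h, Fin.le_zero_iff, eq_comm]

lemma if_succ_eq {k : ℕ} (j : Fin (k + 1)) (i : Fin k) :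
    (if j ≤ i.succ then (1:ℝ) else 0) - (if j ≤ i.castSucc then 1 else 0)
      = (Pi.single j 1 : Fin (k + 1) → ℝ) i.succ := by
  rw [Pi.single_apply]
  by_cases h4 : j ≤ i.castSucc
  · have h5 : j ≤ i.succ := le_trans h4 (Fin.castSucc_lt_succ : i.castSucc < i.succ).le
    have hne : i.succ ≠ j := by
      intro e
      rw [← e] at h4
      exact absurd h4 (not_le_of_gt (Fin.castSucc_lt_succ : i.castSucc < i.succ))
    simp [h4, h5, hne]
  · by_cases h5 : j = i.succ
    · simp [h4, h5]
    · have h6 : ¬ j ≤ i.succ := by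
        rw [fin_le_succ_iff]
        tauto
      rw [if_neg h6, if_neg h4, if_neg (fun e : i.succ = j => h5 e.symm), sub_zero]

lemma tendsto_single_of_cumul {k : ℕ} (γ : ℝ → Fin (k + 1) → ℝ) (l : Filter ℝ)
    (j : Fin (k + 1))
    (h : ∀ m : Fin (k + 1), Tendsto (fun t => ∑ i ∈ univ.filter (fun i => i ≤ m), γ t i) l
      (nhds (if j ≤ m then 1 else 0))) :
    Tendsto γ l (nhds (Pi.single j 1)) := by
  rw [tendsto_pi_nhds]
  intro m
  induction m using Fin.cases with
  | zero =>
      have h0 := h 0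
      simp_rw [cum_zero] at h0
      rwa [if_zero_eq] at h0
  | succ i =>
      have h1 := h i.succ
      have h2 := h i.castSucc
      simp_rw [cum_succ] at h1
      have h3 := h1.sub h2
      have heq : ∀ t, ((∑ jj ∈ univ.filter (fun jj => jj ≤ i.castSucc), γ t jj) + γ t i.succ)
          - ∑ jj ∈ univ.filter (fun jj => jj ≤ i.castSucc), γ t jj = γ t i.succ := fun t => by
        ring
      rw [← if_succ_eq j i]
      exact h3.congr heq

lemma eq_single_of_cumul {k : ℕ} (x : Fin (k + 1) → ℝ) (j : Fin (k + 1))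
    (h : ∀ m : Fin (k + 1), (∑ i ∈ univ.filter (fun i => i ≤ m), x i)
      = if j ≤ m then 1 else 0) :
    x = Pi.single j 1 := by
  funext m
  induction m using Fin.cases with
  | zero =>
      have h0 := h 0
      rwa [cum_zero, if_zero_eq] at h0
  | succ i =>
      have h1 := h i.succ
      have h2 := h i.castSucc
      rw [cum_succ] at h1
      rw [← if_succ_eq j i, ← h1, ← h2]
      ring

end Helpers


/-- sign function -/
noncomputable def eps {k : ℕ} (i a : Fin (k + 1)) : ℝ :=
  if i < a then 1 else if a < i then -1 else 0

lemma sum_W (k : ℕ) (m : Fin (k + 1)) (x : Fin (k + 1) → ℝ) (hx : ∑ i, x i = 1) :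
    ∑ i ∈ univ.filter (fun i => i ≤ m), Wfield k x i
      = (∑ i ∈ univ.filter (fun i => i ≤ m), x i) ^ 2
        - ∑ i ∈ univ.filter (fun i => i ≤ m), x i := by
  classical
  have hA : ∀ a, Wfield k x a = ∑ i, x a * x i * eps i a := by
    intro a
    have hpt : ∀ i, x a * x i * eps i a
        = x a * ((if i < a then x i else 0) - (if a < i then x i else 0)) := by
      intro i
      rcases lt_trichotomy i a with h | h | h
      · simp [eps, h, asymm h]
      · simp [eps, h, lt_irrefl]
      · simp [eps, h, asymm h, not_lt_of_gt h]
    rw [Finset.sum_congr rfl (fun i _ => hpt i), ← Finset.mul_sum, Finset.sum_sub_distrib,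
      ← Finset.sum_filter, ← Finset.sum_filter, Wfield]
  have hanti : ∀ a i : Fin (k + 1), x i * x a * eps a i = -(x a * x i * eps i a) := by
    intro a i
    rcases lt_trichotomy i a with h | h | h
    · simp [eps, h, asymm h, not_lt_of_gt h]; ring
    · simp [eps, h, lt_irrefl]
    · simp [eps, h, asymm h, not_lt_of_gt h]; ring
  set s := univ.filter (fun i : Fin (k + 1) => i ≤ m) with hs
  set sc := univ.filter (fun i : Fin (k + 1) => ¬ i ≤ m) with hsc
  have hsplit : ∀ a, (∑ i, x a * x i * eps i a)
      = ∑ i ∈ s, x a * x i * eps i a + ∑ i ∈ sc, x a * x i * eps i a := by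
    intro a
    rw [hs, hsc, Finset.sum_filter_add_sum_filter_not]
  have hzero : ∑ a ∈ s, ∑ i ∈ s, x a * x i * eps i a = 0 := by
    have h1 : ∑ a ∈ s, ∑ i ∈ s, x a * x i * eps i a
        = ∑ a ∈ s, ∑ i ∈ s, x i * x a * eps a i := Finset.sum_comm
    have h2 : ∑ a ∈ s, ∑ i ∈ s, x i * x a * eps a i
        = -∑ a ∈ s, ∑ i ∈ s, x a * x i * eps i a := by
      rw [← Finset.sum_neg_distrib]
      exact Finset.sum_congr rfl fun a _ => by
        rw [← Finset.sum_neg_distrib]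
        exact Finset.sum_congr rfl fun i _ => hanti a i
    linarith [h1.trans h2]
  have hcross : ∑ a ∈ s, ∑ i ∈ sc, x a * x i * eps i a
      = -((∑ a ∈ s, x a) * (∑ i ∈ sc, x i)) := by
    have hterm : ∀ a ∈ s, ∀ i ∈ sc, x a * x i * eps i a = -(x a * x i) := by
      intro a ha i hi
      have ham : a ≤ m := by simpa [hs] using ha
      have him : ¬ i ≤ m := by simpa [hsc] using hi
      have hai : a < i := lt_of_le_of_lt ham (lt_of_not_ge him)
      simp [eps, hai, asymm hai, not_lt_of_gt hai]
    rw [Finset.sum_congr rfl fun a ha => Finset.sum_congr rfl fun i hi => hterm a ha i hi]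
    simp only [Finset.sum_neg_distrib]
    rw [Finset.sum_mul_sum]
  have hscx : ∑ i ∈ sc, x i = 1 - ∑ i ∈ s, x i := by
    have := Finset.sum_filter_add_sum_filter_not univ (fun i : Fin (k + 1) => i ≤ m) x
    rw [hx] at this
    rw [hs, hsc]
    linarith [this]
  calc ∑ i ∈ s, Wfield k x i = ∑ a ∈ s, ∑ i, x a * x i * eps i a :=
        Finset.sum_congr rfl fun a _ => hA a
    _ = ∑ a ∈ s, (∑ i ∈ s, x a * x i * eps i a + ∑ i ∈ sc, x a * x i * eps i a) :=
        Finset.sum_congr rfl fun a _ => hsplit a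
    _ = (∑ a ∈ s, ∑ i ∈ s, x a * x i * eps i a) + ∑ a ∈ s, ∑ i ∈ sc, x a * x i * eps i a :=
        Finset.sum_add_distrib
    _ = (∑ a ∈ s, x a) ^ 2 - ∑ a ∈ s, x a := by
        rw [hzero, hcross, hscx]; ring
lemma vanish_of_deriv_le (f d : ℝ → ℝ) (hd : ∀ t, HasDerivAt f (d t) t)
    (hb : ∀ t, ‖d t‖ ≤ 1 * ‖f t‖ + 0) (t₀ : ℝ) (h0 : f t₀ = 0) : ∀ t, f t = 0 := by
  have key : ∀ (g e : ℝ → ℝ), (∀ t, HasDerivAt g (e t) t) → (∀ t, ‖e t‖ ≤ 1 * ‖g t‖ + 0) →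
      g t₀ = 0 → ∀ t ≥ t₀, g t = 0 := by
    intro g e hg he hg0 t ht
    have := norm_le_gronwallBound_of_norm_deriv_right_le (f := g) (f' := e)
      (δ := 0) (K := 1) (ε := 0) (a := t₀) (b := t)
      (fun x _ => (hg x).continuousAt.continuousWithinAt)
      (fun x _ => (hg x).hasDerivWithinAt)
      (by simp [hg0]) (fun x _ => he x) t ⟨ht, le_refl t⟩
    rw [gronwallBound_ε0_δ0] at this
    simpa using le_antisymm this (norm_nonneg _)
  intro t
  rcases le_total t₀ t with h | h
  · exact key f d hd hb h0 t h
  · have hr : ∀ u, HasDerivAt (fun u => f (2 * t₀ - u)) (-d (2 * t₀ - u)) u := by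
      intro u
      have h1 : HasDerivAt (fun u : ℝ => 2 * t₀ - u) (-1) u := by
        simpa using (hasDerivAt_id u).const_sub (2 * t₀)
      have h3 := (hd (2 * t₀ - u)).comp u h1
      simp only [mul_neg, mul_one] at h3
      exact h3
    have := key (fun u => f (2 * t₀ - u)) (fun u => -d (2 * t₀ - u)) hr
      (fun u => by simpa using hb (2 * t₀ - u)) (by show f (2 * t₀ - t₀) = 0; rw [show 2 * t₀ - t₀ = t₀ by ring]; exact h0) (2 * t₀ - t) (by linarith)
    simpa using this

/-- Behavior of solutions of the logistic-type ODE `s' = s² − s` in `[0,1]`. -/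
lemma logistic_trichotomy (s : ℝ → ℝ) (hd : ∀ t, HasDerivAt s (s t ^ 2 - s t) t)
    (h01 : ∀ t, s t ∈ Set.Icc (0:ℝ) 1) :
    (∀ t, s t = 0) ∨ (∀ t, s t = 1) ∨
      (Tendsto s atBot (nhds 1) ∧ Tendsto s atTop (nhds 0)) := by
  by_cases hz : ∃ t₀, s t₀ = 0
  · obtain ⟨t₀, ht₀⟩ := hz
    left
    refine vanish_of_deriv_le s (fun t => s t ^ 2 - s t) hd (fun t => ?_) t₀ ht₀
    obtain ⟨h0, h1⟩ := h01 t
    simp only [Real.norm_eq_abs, one_mul, add_zero]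
    rw [abs_of_nonpos (by nlinarith : s t ^ 2 - s t ≤ 0), abs_of_nonneg h0]
    nlinarith
  by_cases ho : ∃ t₀, s t₀ = 1
  · obtain ⟨t₀, ht₀⟩ := ho
    right; left
    have hb : ∀ u, ‖s u ^ 2 - s u‖ ≤ 1 * ‖s u - 1‖ + 0 := by
      intro u
      obtain ⟨h0, h1⟩ := h01 u
      simp only [Real.norm_eq_abs, one_mul, add_zero]
      rw [abs_of_nonpos (by nlinarith : s u ^ 2 - s u ≤ 0),
        abs_of_nonpos (by linarith : s u - 1 ≤ 0)]
      nlinarith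
    have hv := vanish_of_deriv_le (fun u => s u - 1) (fun u => s u ^ 2 - s u)
      (fun u => (hd u).sub_const 1) hb t₀ (by simp [ht₀])
    intro t
    have := hv t
    simp only [sub_eq_zero] at this
    exact this
  · right; right
    push_neg at hz ho
    have hpos : ∀ t, 0 < s t := fun t => lt_of_le_of_ne (h01 t).1 (Ne.symm (hz t))
    have hlt : ∀ t, s t < 1 := fun t => lt_of_le_of_ne (h01 t).2 (ho t)
    have hone : ∀ t, (1:ℝ) - s t ≠ 0 := fun t => ne_of_gt (by linarith [hlt t])
    have hdg : ∀ t, HasDerivAt (fun u => Real.log (s u) - Real.log (1 - s u)) (-1) t := by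
      intro t
      have h1 : HasDerivAt (fun u => Real.log (s u)) ((s t ^ 2 - s t) / s t) t :=
        (hd t).log (ne_of_gt (hpos t))
      have h2 : HasDerivAt (fun u => Real.log (1 - s u)) ((-(s t ^ 2 - s t)) / (1 - s t)) t :=
        HasDerivAt.log (by simpa using (hd t).const_sub 1) (hone t)
      have h3 := h1.sub h2
      have e1 : (s t ^ 2 - s t) / s t = s t - 1 := by
        rw [eq_comm, eq_div_iff (ne_of_gt (hpos t))]; ring
      have e2 : (-(s t ^ 2 - s t)) / (1 - s t) = s t := by
        rw [eq_comm, eq_div_iff (hone t)]; ring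
      rw [e1, e2, show s t - 1 - s t = (-1:ℝ) by ring] at h3
      exact h3
    set c : ℝ := Real.log (s 0) - Real.log (1 - s 0) with hc
    have hglin : ∀ t, Real.log (s t) - Real.log (1 - s t) = c - t := by
      intro t
      have hconst := is_const_of_deriv_eq_zero (f := fun u => Real.log (s u) - Real.log (1 - s u) + u)
        (fun u => ((hdg u).add (hasDerivAt_id u)).differentiableAt)
        (fun u => ((hdg u).add (hasDerivAt_id' u)).deriv.trans (by norm_num)) t 0
      simp only [add_zero] at hconst
      rw [hc]; linarith
    have hform : ∀ t, s t = (Real.exp (t - c) + 1)⁻¹ := by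
      intro t
      have h1 : Real.exp (t - c) = (1 - s t) / s t := by
        have hl : t - c = Real.log ((1 - s t) / s t) := by
          rw [Real.log_div (hone t) (ne_of_gt (hpos t))]
          linarith [hglin t]
        rw [hl, Real.exp_log (div_pos (by linarith [hlt t]) (hpos t))]
      rw [h1, div_add_one (ne_of_gt (hpos t)), show 1 - s t + s t = (1:ℝ) by ring,
        one_div, inv_inv]
    constructor
    · have h2 : Tendsto (fun t => Real.exp (t - c)) atBot (nhds 0) :=
        Real.tendsto_exp_atBot.comp (tendsto_atBot_add_const_right _ _ tendsto_id)
      have h3 : Tendsto (fun t => (Real.exp (t - c) + 1)⁻¹) atBot (nhds ((0 + 1 : ℝ)⁻¹)) :=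
        (h2.add tendsto_const_nhds).inv₀ (by norm_num)
      rw [show ((0:ℝ) + 1)⁻¹ = 1 by norm_num] at h3
      exact h3.congr (fun t => (hform t).symm)
    · have h2 : Tendsto (fun t => Real.exp (t - c) + 1) atTop atTop :=
        tendsto_atTop_add_const_right _ _
          (Real.tendsto_exp_atTop.comp (tendsto_atTop_add_const_right _ _ tendsto_id))
      exact h2.inv_tendsto_atTop.congr (fun t => (hform t).symm)


/-- Convergence of trajectories of `W_k` inside the simplex to vertices: there are
indices `j₋ ≤ j₊` with `γ(t) → e_{j₋}` as `t → −∞` and `γ(t) → e_{j₊}` as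
`t → +∞`, and `j₋ = j₊` iff `γ` is constant. -/
theorem Wfield_trajectory_limits (k : ℕ) (γ : ℝ → Fin (k + 1) → ℝ)
    (hγ : ∀ t : ℝ, HasDerivAt γ (Wfield k (γ t)) t)
    (hΔ : ∀ t : ℝ, γ t ∈ stdSimplex ℝ (Fin (k + 1))) :
    ∃ jm jp : Fin (k + 1), jm ≤ jp ∧
      Tendsto γ atBot (nhds (Pi.single jm 1)) ∧
      Tendsto γ atTop (nhds (Pi.single jp 1)) ∧
      (jm = jp ↔ ∃ c, ∀ t : ℝ, γ t = c) := by
  classical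
  set S : Fin (k + 1) → ℝ → ℝ := fun m t => ∑ i ∈ univ.filter (fun i => i ≤ m), γ t i
    with hSdef
  have hS01 : ∀ m t, S m t ∈ Set.Icc (0:ℝ) 1 := by
    intro m t
    constructor
    · exact Finset.sum_nonneg fun i _ => (hΔ t).1 i
    · rw [← (hΔ t).2]
      exact Finset.sum_le_sum_of_subset_of_nonneg (Finset.filter_subset _ _)
        (fun i _ _ => (hΔ t).1 i)
  have hmono : ∀ (m m' : Fin (k + 1)), m ≤ m' → ∀ t, S m t ≤ S m' t := by
    intro m m' h t
    apply Finset.sum_le_sum_of_subset_of_nonneg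
    · intro i hi
      simp only [mem_filter, mem_univ, true_and] at hi ⊢
      exact le_trans hi h
    · exact fun i _ _ => (hΔ t).1 i
  have hlast : ∀ t, S (Fin.last k) t = 1 := by
    intro t
    rw [hSdef]
    simp only
    rw [show univ.filter (fun i : Fin (k + 1) => i ≤ Fin.last k) = univ by
      simp [Fin.le_last]]
    exact (hΔ t).2
  have hdS : ∀ m t, HasDerivAt (S m) ((S m t) ^ 2 - S m t) t := by
    intro m t
    have h1 : ∀ i : Fin (k + 1), HasDerivAt (fun t => γ t i) (Wfield k (γ t) i) t :=
      fun i => hasDerivAt_pi.mp (hγ t) i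
    have h2 := HasDerivAt.fun_sum
      (fun i (_ : i ∈ univ.filter (fun i : Fin (k + 1) => i ≤ m)) => h1 i)
    rwa [sum_W k m (γ t) (hΔ t).2] at h2
  have tri : ∀ m, (∀ t, S m t = 0) ∨ (∀ t, S m t = 1) ∨
      (Tendsto (S m) atBot (nhds 1) ∧ Tendsto (S m) atTop (nhds 0)) :=
    fun m => logistic_trichotomy (S m) (hdS m) (fun t => hS01 m t)
  -- jp : least index with S ≡ 1
  have hne1 : (univ.filter (fun m : Fin (k + 1) => ∀ t, S m t = 1)).Nonempty :=
    ⟨Fin.last k, by simp [hlast]⟩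
  set jp := (univ.filter (fun m : Fin (k + 1) => ∀ t, S m t = 1)).min' hne1 with hjp
  have hjp1 : ∀ t, S jp t = 1 :=
    (Finset.mem_filter.mp ((univ.filter _).min'_mem hne1)).2
  have hjpmin : ∀ m, (∀ t, S m t = 1) → jp ≤ m := fun m hm =>
    Finset.min'_le _ _ (Finset.mem_filter.mpr ⟨Finset.mem_univ _, hm⟩)
  -- jm : least index with S not ≡ 0
  have hne0 : (univ.filter (fun m : Fin (k + 1) => ¬ ∀ t, S m t = 0)).Nonempty :=
    ⟨Fin.last k, by
      simp only [mem_filter, mem_univ, true_and]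
      intro h
      have := h 0
      rw [hlast 0] at this
      norm_num at this⟩
  set jm := (univ.filter (fun m : Fin (k + 1) => ¬ ∀ t, S m t = 0)).min' hne0 with hjm
  have hjmne : ¬ ∀ t, S jm t = 0 :=
    (Finset.mem_filter.mp ((univ.filter _).min'_mem hne0)).2
  have hjmmin : ∀ m, ¬ (∀ t, S m t = 0) → jm ≤ m := fun m hm =>
    Finset.min'_le (univ.filter (fun m : Fin (k + 1) => ¬ ∀ t, S m t = 0)) m
      (Finset.mem_filter.mpr ⟨Finset.mem_univ _, hm⟩)
  have hjmjp : jm ≤ jp := by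
    apply hjmmin
    intro h
    have := h 0
    rw [hjp1 0] at this
    norm_num at this
  -- S m ≡ 1 for jp ≤ m
  have hSone : ∀ m, jp ≤ m → ∀ t, S m t = 1 := by
    intro m h t
    refine le_antisymm (hS01 m t).2 ?_
    rw [← hjp1 t]
    exact hmono jp m h t
  -- S m ≡ 0 for m with ¬ jm ≤ m
  have hSzero : ∀ m, ¬ jm ≤ m → ∀ t, S m t = 0 := by
    intro m h
    by_contra hc
    exact h (hjmmin m hc)
  have hStop : ∀ m, Tendsto (S m) atTop (nhds (if jp ≤ m then 1 else 0)) := by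
    intro m
    by_cases h : jp ≤ m
    · rw [if_pos h]
      exact tendsto_const_nhds.congr fun t => (hSone m h t).symm
    · rw [if_neg h]
      rcases tri m with h0 | h1 | ⟨_, htop⟩
      · exact tendsto_const_nhds.congr fun t => (h0 t).symm
      · exact absurd (hjpmin m h1) h
      · exact htop
  have hSbot : ∀ m, Tendsto (S m) atBot (nhds (if jm ≤ m then 1 else 0)) := by
    intro m
    by_cases h : jm ≤ m
    · rw [if_pos h]
      have hmne : ¬ ∀ t, S m t = 0 := by
        intro hz
        apply hjmne
        intro t
        refine le_antisymm ?_ (hS01 jm t).1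
        rw [← hz t]
        exact hmono jm m h t
      rcases tri m with h0 | h1 | ⟨hbot, _⟩
      · exact absurd h0 hmne
      · exact tendsto_const_nhds.congr fun t => (h1 t).symm
      · exact hbot
    · rw [if_neg h]
      exact tendsto_const_nhds.congr fun t => (hSzero m h t).symm
  have hTB : Tendsto γ atBot (nhds (Pi.single jm 1)) :=
    tendsto_single_of_cumul γ atBot jm (fun m => hSbot m)
  have hTT : Tendsto γ atTop (nhds (Pi.single jp 1)) :=
    tendsto_single_of_cumul γ atTop jp (fun m => hStop m)
  refine ⟨jm, jp, hjmjp, hTB, hTT, ?_, ?_⟩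
  · intro hEq
    refine ⟨Pi.single jp 1, fun t => ?_⟩
    apply eq_single_of_cumul (γ t) jp
    intro m
    by_cases h : jp ≤ m
    · rw [if_pos h]
      exact hSone m h t
    · rw [if_neg h]
      have : ¬ jm ≤ m := by rwa [hEq]
      exact hSzero m this t
  · rintro ⟨c, hc⟩
    have h1 : Tendsto γ atBot (nhds c) := tendsto_const_nhds.congr fun t => (hc t).symm
    have h2 : Tendsto γ atTop (nhds c) := tendsto_const_nhds.congr fun t => (hc t).symm
    have e1 : Pi.single jm (1:ℝ) = c := tendsto_nhds_unique hTB h1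
    have e2 : Pi.single jp (1:ℝ) = c := tendsto_nhds_unique hTT h2
    by_contra hne
    have := congrFun (e1.trans e2.symm) jm
    rw [Pi.single_eq_same, Pi.single_apply, if_neg hne] at this
    norm_num at this
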